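/- The ℓ1-contextuality distance is subadditive under independent juxtapositions: for behaviors B1 in a scenario S1 and B2 in a scenario S2, with NC(S1), NC(S2) and NC(S1 ⊗ S2) nonempty, one has D(B1 ⊗ B2) ≤ D(B1) + D(B2), where D(B1 ⊗ B2) is computed in the juxtaposed scenario S1 ⊗ S2. -/

import Mathlib

open scoped BigOperators

/-- A probability distribution on a finite type. -/
def IsDist {X : Type} [Fintype X] (f : X → ℝ) : Prop :=
  (∀ x, 0 ≤ f x) ∧ ∑ x, f x = 1

lemma isDist_prodFun {A B : Type} [Fintype A] [Fintype B] {f : A → ℝ} {g : B → ℝ}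
    (hf : IsDist f) (hg : IsDist g) :
    IsDist (fun x : A × B => f x.1 * g x.2) := by
  refine ⟨fun x => mul_nonneg (hf.1 x.1) (hg.1 x.2), ?_⟩
  calc ∑ x : A × B, f x.1 * g x.2 = ∑ a, ∑ b, f a * g b := by
        rw [Fintype.sum_prod_type]
    _ = (∑ a, f a) * (∑ b, g b) := by rw [Finset.sum_mul_sum]
    _ = 1 := by rw [hf.2, hg.2, mul_one]

lemma isDist_prodFun' {K1 J1 K2 J2 : Type} [Fintype K1] [Fintype J1] [Fintype K2] [Fintype J2]
    {f : K1 × J1 → ℝ} {g : K2 × J2 → ℝ} (hf : IsDist f) (hg : IsDist g) :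
    IsDist (fun kj : (K1 × K2) × (J1 × J2) => f (kj.1.1, kj.2.1) * g (kj.1.2, kj.2.2)) := by
  refine ⟨fun kj => mul_nonneg (hf.1 _) (hg.1 _), ?_⟩
  have h := (isDist_prodFun hf hg).2
  rw [← h]
  exact Fintype.sum_equiv (Equiv.prodProdProdComm K1 K2 J1 J2) _ _ (by rintro ⟨⟨a, b⟩, c, d⟩; rfl)

/-- A prepare-and-measure scenario: finite nonempty sets of preparations `I`,
measurements `J` and outcomes `K` (carried as type-class assumptions on the index
types), together with a family of preparation operational equivalences (pairs of
probability distributions on `I`) and a family of measurement operational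
equivalences (pairs of probability distributions on `K × J`). -/
structure Scenario (I J K : Type) [Fintype I] [Fintype J] [Fintype K] where
  PE : Type
  ME : Type
  prepEq : PE → (I → ℝ) × (I → ℝ)
  measEq : ME → (K × J → ℝ) × (K × J → ℝ)
  prep_dist : ∀ s, IsDist (prepEq s).1 ∧ IsDist (prepEq s).2
  meas_dist : ∀ r, IsDist (measEq r).1 ∧ IsDist (measEq r).2

/-- A behavior: a family `p k ∣ j, i` of nonnegative reals, normalized over outcomes. -/
def IsBehavior {I J K : Type} [Fintype I] [Fintype J] [Fintype K]
    (p : I → J → K → ℝ) : Prop :=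
  (∀ i j k, 0 ≤ p i j k) ∧ ∀ i j, ∑ k, p i j k = 1

/-- A behavior is noncontextual in a scenario `S` if it admits a universally
noncontextual ontological model over a finite ontic space. -/
def Noncontextual {I J K : Type} [Fintype I] [Fintype J] [Fintype K]
    (S : Scenario I J K) (p : I → J → K → ℝ) : Prop :=
  ∃ (n : ℕ) (μ : I → Fin n → ℝ) (ξ : Fin n → J → K → ℝ),
    (∀ i, IsDist (μ i)) ∧
    (∀ l j, IsDist (ξ l j)) ∧
    (∀ i j k, p i j k = ∑ l, ξ l j k * μ i l) ∧
    (∀ s l, ∑ i, ((S.prepEq s).1 i - (S.prepEq s).2 i) * μ i l = 0) ∧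
    (∀ r l, ∑ kj : K × J, ((S.measEq r).1 kj - (S.measEq r).2 kj) * ξ l kj.2 kj.1 = 0)

/-- The juxtaposition of two behaviors. -/
def prodBehavior {I1 J1 K1 I2 J2 K2 : Type}
    [Fintype I1] [Fintype J1] [Fintype K1] [Fintype I2] [Fintype J2] [Fintype K2]
    (p1 : I1 → J1 → K1 → ℝ) (p2 : I2 → J2 → K2 → ℝ) :
    I1 × I2 → J1 × J2 → K1 × K2 → ℝ :=
  fun i j k => p1 i.1 j.1 k.1 * p2 i.2 j.2 k.2

/-- The juxtaposition `S1 ⊗ S2` of two scenarios: preparation (resp. measurement)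
equivalences are all pairs `(α ⊗ γ, β ⊗ γ)` with `(α, β)` an equivalence of `S1` and
`γ` an arbitrary distribution on the preparations (resp. measurement events) of `S2`,
together with the symmetric ones coming from `S2`. -/
def Scenario.prod {I1 J1 K1 I2 J2 K2 : Type}
    [Fintype I1] [Fintype J1] [Fintype K1] [Fintype I2] [Fintype J2] [Fintype K2]
    (S1 : Scenario I1 J1 K1) (S2 : Scenario I2 J2 K2) :
    Scenario (I1 × I2) (J1 × J2) (K1 × K2) where
  PE := (S1.PE × {γ : I2 → ℝ // IsDist γ}) ⊕ (S2.PE × {γ : I1 → ℝ // IsDist γ})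
  ME := (S1.ME × {γ : K2 × J2 → ℝ // IsDist γ}) ⊕ (S2.ME × {γ : K1 × J1 → ℝ // IsDist γ})
  prepEq := fun e =>
    match e with
    | Sum.inl (s, γ) =>
        (fun i => (S1.prepEq s).1 i.1 * γ.1 i.2, fun i => (S1.prepEq s).2 i.1 * γ.1 i.2)
    | Sum.inr (s, γ) =>
        (fun i => γ.1 i.1 * (S2.prepEq s).1 i.2, fun i => γ.1 i.1 * (S2.prepEq s).2 i.2)
  measEq := fun e =>
    match e with
    | Sum.inl (r, γ) =>
        (fun kj => (S1.measEq r).1 (kj.1.1, kj.2.1) * γ.1 (kj.1.2, kj.2.2),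
         fun kj => (S1.measEq r).2 (kj.1.1, kj.2.1) * γ.1 (kj.1.2, kj.2.2))
    | Sum.inr (r, γ) =>
        (fun kj => γ.1 (kj.1.1, kj.2.1) * (S2.measEq r).1 (kj.1.2, kj.2.2),
         fun kj => γ.1 (kj.1.1, kj.2.1) * (S2.measEq r).2 (kj.1.2, kj.2.2))
  prep_dist := by
    rintro (⟨s, γ⟩ | ⟨s, γ⟩)
    · exact ⟨isDist_prodFun (S1.prep_dist s).1 γ.2, isDist_prodFun (S1.prep_dist s).2 γ.2⟩
    · exact ⟨isDist_prodFun γ.2 (S2.prep_dist s).1, isDist_prodFun γ.2 (S2.prep_dist s).2⟩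
  meas_dist := by
    rintro (⟨r, γ⟩ | ⟨r, γ⟩)
    · exact ⟨isDist_prodFun' (S1.meas_dist r).1 γ.2, isDist_prodFun' (S1.meas_dist r).2 γ.2⟩
    · exact ⟨isDist_prodFun' γ.2 (S2.meas_dist r).1, isDist_prodFun' γ.2 (S2.meas_dist r).2⟩

/-- A free operation: a pre-processing of preparations, a pre-processing of
measurement choices and, for each simulated measurement, a post-processing of the
outcomes, all given by stochastic maps. -/
structure FreeOp (I J K I' J' K' : Type)
    [Fintype I] [Fintype J] [Fintype K] [Fintype I'] [Fintype J'] [Fintype K'] where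
  qP : I' → I → ℝ
  qM : J' → J → ℝ
  qO : J' → K → K' → ℝ
  qP_dist : ∀ i', IsDist (qP i')
  qM_dist : ∀ j', IsDist (qM j')
  qO_dist : ∀ j' k, IsDist (qO j' k)

/-- Action of a free operation on a behavior. -/
def FreeOp.apply {I J K I' J' K' : Type}
    [Fintype I] [Fintype J] [Fintype K] [Fintype I'] [Fintype J'] [Fintype K']
    (T : FreeOp I J K I' J' K') (p : I → J → K → ℝ) : I' → J' → K' → ℝ :=
  fun i' j' k' => ∑ i, ∑ j, ∑ k, T.qO j' k k' * p i j k * T.qM j' j * T.qP i' i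

/-- `T` lifts the operational equivalences of `S'` to those of `S`. -/
def LiftsEquivalences {I J K I' J' K' : Type}
    [Fintype I] [Fintype J] [Fintype K] [Fintype I'] [Fintype J'] [Fintype K']
    (S : Scenario I J K) (S' : Scenario I' J' K') (T : FreeOp I J K I' J' K') : Prop :=
  (∀ s' : S'.PE, ∃ s : S.PE, ∀ i : I,
      ∑ i' : I', ((S'.prepEq s').1 i' - (S'.prepEq s').2 i') * T.qP i' i
        = (S.prepEq s).1 i - (S.prepEq s).2 i) ∧
  (∀ r' : S'.ME, ∃ r : S.ME, ∀ k : K, ∀ j : J,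
      ∑ kj' : K' × J', ((S'.measEq r').1 kj' - (S'.measEq r').2 kj') *
          (T.qO kj'.2 k kj'.1 * T.qM kj'.2 j)
        = (S.measEq r).1 (k, j) - (S.measEq r).2 (k, j))

/-- The contextual fraction. -/
noncomputable def ctxFraction {I J K : Type} [Fintype I] [Fintype J] [Fintype K]
    (S : Scenario I J K) (p : I → J → K → ℝ) : ℝ :=
  1 - sSup {l : ℝ | 0 ≤ l ∧ l ≤ 1 ∧ ∃ q q' : I → J → K → ℝ,
      Noncontextual S q ∧ IsBehavior q' ∧
      ∀ i j k, p i j k = l * q i j k + (1 - l) * q' i j k}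

/-- The robustness of contextuality. -/
noncomputable def robustness {I J K : Type} [Fintype I] [Fintype J] [Fintype K]
    (S : Scenario I J K) (p : I → J → K → ℝ) : ℝ :=
  sInf {l : ℝ | 0 ≤ l ∧ l ≤ 1 ∧ ∃ q : I → J → K → ℝ, Noncontextual S q ∧
      Noncontextual S (fun i j k => l * q i j k + (1 - l) * p i j k)}

/-- The robustness with respect to a fixed reference behavior. -/
noncomputable def refRobustness {I J K : Type} [Fintype I] [Fintype J] [Fintype K]
    (S : Scenario I J K) (pref p : I → J → K → ℝ) : ℝ :=
  sInf {l : ℝ | 0 ≤ l ∧ l ≤ 1 ∧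
      Noncontextual S (fun i j k => l * pref i j k + (1 - l) * p i j k)}

/-- One term of the Kullback-Leibler divergence, with the conventions
`0 log (0/q) = 0` and `p log (p/0) = ∞` for `p > 0`. -/
noncomputable def klTerm (p q : ℝ) : EReal :=
  if p = 0 then 0 else if q = 0 then ⊤ else ((p * Real.log (p / q) : ℝ) : EReal)

/-- KL divergence between behaviors: maximum over preparations and measurements. -/
noncomputable def DKL {I J K : Type} [Fintype I] [Fintype J] [Fintype K]
    (p q : I → J → K → ℝ) : EReal :=
  ⨆ i : I, ⨆ j : J, ∑ k : K, klTerm (p i j k) (q i j k)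

/-- The relative entropy of contextuality. -/
noncomputable def relEntCtx {I J K : Type} [Fintype I] [Fintype J] [Fintype K]
    (S : Scenario I J K) (p : I → J → K → ℝ) : EReal :=
  ⨅ q ∈ {q : I → J → K → ℝ | Noncontextual S q}, DKL p q

/-- ℓ1 distance between behaviors: maximum over preparations and measurements. -/
noncomputable def D1 {I J K : Type} [Fintype I] [Fintype J] [Fintype K]
    (p q : I → J → K → ℝ) : ℝ :=
  ⨆ ij : I × J, ∑ k : K, |p ij.1 ij.2 k - q ij.1 ij.2 k|

/-- The ℓ1-contextuality distance. -/
noncomputable def l1CtxDistance {I J K : Type} [Fintype I] [Fintype J] [Fintype K]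
    (S : Scenario I J K) (p : I → J → K → ℝ) : ℝ :=
  sInf {d : ℝ | ∃ q : I → J → K → ℝ, Noncontextual S q ∧ D1 p q = d}

/-- The uniform ℓ1-contextuality distance. -/
noncomputable def uniformL1CtxDistance {I J K : Type} [Fintype I] [Fintype J] [Fintype K]
    (S : Scenario I J K) (p : I → J → K → ℝ) : ℝ :=
  (1 / (2 * (Fintype.card I : ℝ) * (Fintype.card J : ℝ))) *
    sInf {d : ℝ | ∃ q : I → J → K → ℝ, Noncontextual S q ∧
      ∑ i, ∑ j, ∑ k, |p i j k - q i j k| = d}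

/-- The measurement-assignment polytope of a scenario. -/
def MAPolytope {I J K : Type} [Fintype I] [Fintype J] [Fintype K]
    (S : Scenario I J K) : Set (K × J → ℝ) :=
  {ξ | (∀ kj, 0 ≤ ξ kj) ∧ (∀ j, ∑ k, ξ (k, j) = 1) ∧
    ∀ r, ∑ kj : K × J, ((S.measEq r).1 kj - (S.measEq r).2 kj) * ξ kj = 0}

lemma noncontextual_isBehavior {I J K : Type} [Fintype I] [Fintype J] [Fintype K]
    {S : Scenario I J K} {q : I → J → K → ℝ} (hq : Noncontextual S q) :
    IsBehavior q := by
  obtain ⟨n, μ, ξ, hμ, hξ, hrep, -, -⟩ := hq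
  constructor
  · intro i j k
    rw [hrep]
    exact Finset.sum_nonneg fun l _ => mul_nonneg ((hξ l j).1 k) ((hμ i).1 l)
  · intro i j
    simp only [hrep]
    rw [Finset.sum_comm]
    calc ∑ l, ∑ k, ξ l j k * μ i l = ∑ l, (∑ k, ξ l j k) * μ i l := by
          simp [Finset.sum_mul]
      _ = ∑ l, μ i l := by
          refine Finset.sum_congr rfl fun l _ => ?_
          rw [(hξ l j).2, one_mul]
      _ = 1 := (hμ i).2

lemma noncontextual_prod {I1 J1 K1 I2 J2 K2 : Type}
    [Fintype I1] [Fintype J1] [Fintype K1] [Fintype I2] [Fintype J2] [Fintype K2]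
    {S1 : Scenario I1 J1 K1} {S2 : Scenario I2 J2 K2}
    {q1 : I1 → J1 → K1 → ℝ} {q2 : I2 → J2 → K2 → ℝ}
    (hq1 : Noncontextual S1 q1) (hq2 : Noncontextual S2 q2) :
    Noncontextual (S1.prod S2) (prodBehavior q1 q2) := by
  obtain ⟨n1, μ1, ξ1, hμ1, hξ1, hrep1, hpe1, hme1⟩ := hq1
  obtain ⟨n2, μ2, ξ2, hμ2, hξ2, hrep2, hpe2, hme2⟩ := hq2
  classical
  refine ⟨n1 * n2,
    fun i l => μ1 i.1 (finProdFinEquiv.symm l).1 * μ2 i.2 (finProdFinEquiv.symm l).2,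
    fun l j k => ξ1 (finProdFinEquiv.symm l).1 j.1 k.1 * ξ2 (finProdFinEquiv.symm l).2 j.2 k.2,
    ?_, ?_, ?_, ?_, ?_⟩
  · intro i
    refine ⟨fun l => mul_nonneg ((hμ1 i.1).1 _) ((hμ2 i.2).1 _), ?_⟩
    rw [← finProdFinEquiv.sum_comp (M := ℝ)]
    simp only [Equiv.symm_apply_apply]
    rw [Fintype.sum_prod_type, ← Finset.sum_mul_sum, (hμ1 i.1).2, (hμ2 i.2).2, mul_one]
  · intro l j
    refine ⟨fun k => mul_nonneg ((hξ1 _ j.1).1 _) ((hξ2 _ j.2).1 _), ?_⟩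
    rw [Fintype.sum_prod_type, ← Finset.sum_mul_sum, (hξ1 _ j.1).2, (hξ2 _ j.2).2, mul_one]
  · intro i j k
    rw [← finProdFinEquiv.sum_comp (M := ℝ)]
    simp only [Equiv.symm_apply_apply]
    rw [Fintype.sum_prod_type]
    have : ∀ l1 : Fin n1, ∀ l2 : Fin n2,
        ξ1 l1 j.1 k.1 * ξ2 l2 j.2 k.2 * (μ1 i.1 l1 * μ2 i.2 l2)
          = (ξ1 l1 j.1 k.1 * μ1 i.1 l1) * (ξ2 l2 j.2 k.2 * μ2 i.2 l2) := fun _ _ => by ring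
    simp only [this]
    rw [← Finset.sum_mul_sum, ← hrep1, ← hrep2]
    rfl
  · rintro (⟨s, γ⟩ | ⟨s, γ⟩) l
    · simp only [Scenario.prod, Fintype.sum_prod_type]
      have : ∀ i1 : I1, ∀ i2 : I2,
          ((S1.prepEq s).1 i1 * γ.1 i2 - (S1.prepEq s).2 i1 * γ.1 i2) *
            (μ1 i1 (finProdFinEquiv.symm l).1 * μ2 i2 (finProdFinEquiv.symm l).2)
          = (((S1.prepEq s).1 i1 - (S1.prepEq s).2 i1) * μ1 i1 (finProdFinEquiv.symm l).1) *
            (γ.1 i2 * μ2 i2 (finProdFinEquiv.symm l).2) := fun _ _ => by ring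
      simp only [this]
      rw [← Finset.sum_mul_sum, hpe1 s, zero_mul]
    · simp only [Scenario.prod, Fintype.sum_prod_type]
      have : ∀ i1 : I1, ∀ i2 : I2,
          (γ.1 i1 * (S2.prepEq s).1 i2 - γ.1 i1 * (S2.prepEq s).2 i2) *
            (μ1 i1 (finProdFinEquiv.symm l).1 * μ2 i2 (finProdFinEquiv.symm l).2)
          = (γ.1 i1 * μ1 i1 (finProdFinEquiv.symm l).1) *
            (((S2.prepEq s).1 i2 - (S2.prepEq s).2 i2) * μ2 i2 (finProdFinEquiv.symm l).2) :=
        fun _ _ => by ring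
      simp only [this]
      rw [← Finset.sum_mul_sum, hpe2 s, mul_zero]
  · rintro (⟨r, γ⟩ | ⟨r, γ⟩) l
    · simp only [Scenario.prod]
      rw [← (Equiv.prodProdProdComm K1 J1 K2 J2).sum_comp (M := ℝ)]
      simp only [Equiv.prodProdProdComm_apply]
      rw [Fintype.sum_prod_type]
      have : ∀ a : K1 × J1, ∀ b : K2 × J2,
          ((S1.measEq r).1 (a.1, a.2) * γ.1 (b.1, b.2)
            - (S1.measEq r).2 (a.1, a.2) * γ.1 (b.1, b.2)) *
            (ξ1 (finProdFinEquiv.symm l).1 a.2 a.1 * ξ2 (finProdFinEquiv.symm l).2 b.2 b.1)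
          = (((S1.measEq r).1 a - (S1.measEq r).2 a) * ξ1 (finProdFinEquiv.symm l).1 a.2 a.1) *
            (γ.1 b * ξ2 (finProdFinEquiv.symm l).2 b.2 b.1) := fun _ _ => by ring
      simp only [this]
      rw [← Finset.sum_mul_sum, hme1 r, zero_mul]
    · simp only [Scenario.prod]
      rw [← (Equiv.prodProdProdComm K1 J1 K2 J2).sum_comp (M := ℝ)]
      simp only [Equiv.prodProdProdComm_apply]
      rw [Fintype.sum_prod_type]
      have : ∀ a : K1 × J1, ∀ b : K2 × J2,
          (γ.1 (a.1, a.2) * (S2.measEq r).1 (b.1, b.2)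
            - γ.1 (a.1, a.2) * (S2.measEq r).2 (b.1, b.2)) *
            (ξ1 (finProdFinEquiv.symm l).1 a.2 a.1 * ξ2 (finProdFinEquiv.symm l).2 b.2 b.1)
          = (γ.1 a * ξ1 (finProdFinEquiv.symm l).1 a.2 a.1) *
            (((S2.measEq r).1 b - (S2.measEq r).2 b) * ξ2 (finProdFinEquiv.symm l).2 b.2 b.1) :=
        fun _ _ => by ring
      simp only [this]
      rw [← Finset.sum_mul_sum, hme2 r, mul_zero]

lemma D1_nonneg {I J K : Type} [Fintype I] [Fintype J] [Fintype K]
    [Nonempty I] [Nonempty J] (p q : I → J → K → ℝ) : 0 ≤ D1 p q :=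
  le_ciSup_of_le (Set.finite_range _).bddAbove (Classical.arbitrary _)
    (Finset.sum_nonneg fun _ _ => abs_nonneg _)

lemma D1_prod_le {I1 J1 K1 I2 J2 K2 : Type}
    [Fintype I1] [Fintype J1] [Fintype K1] [Fintype I2] [Fintype J2] [Fintype K2]
    [Nonempty I1] [Nonempty J1] [Nonempty I2] [Nonempty J2]
    {p1 q1 : I1 → J1 → K1 → ℝ} {p2 q2 : I2 → J2 → K2 → ℝ}
    (hp1 : IsBehavior p1) (hq2 : IsBehavior q2) :
    D1 (prodBehavior p1 p2) (prodBehavior q1 q2) ≤ D1 p1 q1 + D1 p2 q2 := by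
  refine ciSup_le fun ij => ?_
  obtain ⟨⟨i1, i2⟩, j1, j2⟩ := ij
  have key : ∑ k : K1 × K2, |prodBehavior p1 p2 (i1, i2) (j1, j2) k
        - prodBehavior q1 q2 (i1, i2) (j1, j2) k|
      ≤ (∑ k1, |p1 i1 j1 k1 - q1 i1 j1 k1|) + ∑ k2, |p2 i2 j2 k2 - q2 i2 j2 k2| := by
    rw [Fintype.sum_prod_type]
    have hb : ∀ k1 : K1, ∀ k2 : K2,
        |p1 i1 j1 k1 * p2 i2 j2 k2 - q1 i1 j1 k1 * q2 i2 j2 k2|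
          ≤ |p1 i1 j1 k1 - q1 i1 j1 k1| * q2 i2 j2 k2
            + p1 i1 j1 k1 * |p2 i2 j2 k2 - q2 i2 j2 k2| := by
      intro k1 k2
      have : p1 i1 j1 k1 * p2 i2 j2 k2 - q1 i1 j1 k1 * q2 i2 j2 k2
          = (p1 i1 j1 k1 - q1 i1 j1 k1) * q2 i2 j2 k2
            + p1 i1 j1 k1 * (p2 i2 j2 k2 - q2 i2 j2 k2) := by ring
      rw [this]
      calc |(p1 i1 j1 k1 - q1 i1 j1 k1) * q2 i2 j2 k2
            + p1 i1 j1 k1 * (p2 i2 j2 k2 - q2 i2 j2 k2)|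
          ≤ |(p1 i1 j1 k1 - q1 i1 j1 k1) * q2 i2 j2 k2|
            + |p1 i1 j1 k1 * (p2 i2 j2 k2 - q2 i2 j2 k2)| := abs_add_le _ _
        _ = |p1 i1 j1 k1 - q1 i1 j1 k1| * q2 i2 j2 k2
            + p1 i1 j1 k1 * |p2 i2 j2 k2 - q2 i2 j2 k2| := by
            rw [abs_mul, abs_mul, abs_of_nonneg (hq2.1 i2 j2 k2),
              abs_of_nonneg (hp1.1 i1 j1 k1)]
    calc ∑ k1, ∑ k2, |p1 i1 j1 k1 * p2 i2 j2 k2 - q1 i1 j1 k1 * q2 i2 j2 k2|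
        ≤ ∑ k1, ∑ k2, (|p1 i1 j1 k1 - q1 i1 j1 k1| * q2 i2 j2 k2
            + p1 i1 j1 k1 * |p2 i2 j2 k2 - q2 i2 j2 k2|) := by
          exact Finset.sum_le_sum fun k1 _ => Finset.sum_le_sum fun k2 _ => hb k1 k2
      _ = (∑ k1, |p1 i1 j1 k1 - q1 i1 j1 k1|) * (∑ k2, q2 i2 j2 k2)
            + (∑ k1, p1 i1 j1 k1) * (∑ k2, |p2 i2 j2 k2 - q2 i2 j2 k2|) := by
          simp only [Finset.sum_add_distrib, ← Finset.sum_mul_sum]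
      _ = (∑ k1, |p1 i1 j1 k1 - q1 i1 j1 k1|) + ∑ k2, |p2 i2 j2 k2 - q2 i2 j2 k2| := by
          rw [hq2.2 i2 j2, hp1.2 i1 j1, mul_one, one_mul]
  refine key.trans (add_le_add ?_ ?_)
  · exact le_ciSup_of_le (Set.finite_range _).bddAbove (i1, j1) le_rfl
  · exact le_ciSup_of_le (Set.finite_range _).bddAbove (i2, j2) le_rfl

/-- the ℓ1-contextuality distance is subadditive under independent
juxtapositions. -/
theorem l1CtxDistance_subadditive
    {I1 J1 K1 I2 J2 K2 : Type}
    [Fintype I1] [Fintype J1] [Fintype K1] [Fintype I2] [Fintype J2] [Fintype K2]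
    [Nonempty I1] [Nonempty J1] [Nonempty K1] [Nonempty I2] [Nonempty J2] [Nonempty K2]
    (S1 : Scenario I1 J1 K1) (S2 : Scenario I2 J2 K2)
    (p1 : I1 → J1 → K1 → ℝ) (p2 : I2 → J2 → K2 → ℝ)
    (hp1 : IsBehavior p1) (hp2 : IsBehavior p2)
    (h1 : {q : I1 → J1 → K1 → ℝ | Noncontextual S1 q}.Nonempty)
    (h2 : {q : I2 → J2 → K2 → ℝ | Noncontextual S2 q}.Nonempty)
    (h12 : {q : I1 × I2 → J1 × J2 → K1 × K2 → ℝ |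
        Noncontextual (S1.prod S2) q}.Nonempty) :
    l1CtxDistance (S1.prod S2) (prodBehavior p1 p2)
      ≤ l1CtxDistance S1 p1 + l1CtxDistance S2 p2 := by
  refine le_of_forall_pos_le_add fun ε hε => ?_
  obtain ⟨qa, hqa⟩ := h1
  obtain ⟨qb, hqb⟩ := h2
  have hne1 : {d : ℝ | ∃ q, Noncontextual S1 q ∧ D1 p1 q = d}.Nonempty :=
    ⟨D1 p1 qa, qa, hqa, rfl⟩
  have hne2 : {d : ℝ | ∃ q, Noncontextual S2 q ∧ D1 p2 q = d}.Nonempty :=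
    ⟨D1 p2 qb, qb, hqb, rfl⟩
  obtain ⟨d1, ⟨q1, hq1, hd1⟩, hlt1⟩ := Real.lt_sInf_add_pos hne1 (half_pos hε)
  obtain ⟨d2, ⟨q2, hq2, hd2⟩, hlt2⟩ := Real.lt_sInf_add_pos hne2 (half_pos hε)
  have hbdd : BddBelow {d : ℝ | ∃ q, Noncontextual (S1.prod S2) q ∧
      D1 (prodBehavior p1 p2) q = d} := by
    refine ⟨0, fun d hd => ?_⟩
    obtain ⟨q, -, rfl⟩ := hd
    exact D1_nonneg _ _
  have hle : l1CtxDistance (S1.prod S2) (prodBehavior p1 p2)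
      ≤ D1 (prodBehavior p1 p2) (prodBehavior q1 q2) :=
    csInf_le hbdd ⟨prodBehavior q1 q2, noncontextual_prod hq1 hq2, rfl⟩
  have hprod := D1_prod_le (p2 := p2) (q1 := q1) hp1 (noncontextual_isBehavior hq2)
  have : l1CtxDistance (S1.prod S2) (prodBehavior p1 p2) ≤ d1 + d2 := by
    rw [← hd1, ← hd2]; exact hle.trans hprod
  have hε2 : ε / 2 + ε / 2 = ε := by ring
  calc l1CtxDistance (S1.prod S2) (prodBehavior p1 p2) ≤ d1 + d2 := this
    _ ≤ (l1CtxDistance S1 p1 + ε / 2) + (l1CtxDistance S2 p2 + ε / 2) :=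
        add_le_add hlt1.le hlt2.le
    _ = l1CtxDistance S1 p1 + l1CtxDistance S2 p2 + ε := by ring
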